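/- Assume R is Noetherian. If the ideal of R generated by the five entries of b1 contains an R-regular sequence of length 3 (i.e., has grade at least 3), then the complex B is acyclic: the linear map given by b3 is injective, the kernel of the linear map given by b2 equals the image of the linear map given by b3, and the kernel of the linear map given by b1 equals the image of the linear map given by b2. -/

import Mathlib

/-- The data of Brown's complex `B`: eleven elements of a commutative ring. -/
structure BData (R : Type*) where
  (u11 u12 u13 u21 u22 u23 pi1 pi2 pi3 w1 z2 : R)

namespace BData

variable {R : Type*} [CommRing R] (d : BData R)

def UP1 : R := d.u11*d.pi1 + d.u12*d.pi2 + d.u13*d.pi3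

def UP2 : R := d.u21*d.pi1 + d.u22*d.pi2 + d.u23*d.pi3

def D1 : R := d.u12*d.u23 - d.u13*d.u22

def D2 : R := -(d.u11*d.u23 - d.u13*d.u21)

def D3 : R := d.u11*d.u22 - d.u12*d.u21

/-- The first differential of `B` (a `1 × 5` matrix). -/
def b1 : Matrix (Fin 1) (Fin 5) R :=
  !![d.UP1, d.UP2, d.z2*d.D1 - d.w1*d.pi1, d.z2*d.D2 - d.w1*d.pi2, d.z2*d.D3 - d.w1*d.pi3]

/-- The second differential of `B` (a `5 × 6` matrix). -/
def b2 : Matrix (Fin 5) (Fin 6) R :=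
  !![d.UP2, 0, -d.w1, -d.z2*d.u21, -d.z2*d.u22, -d.z2*d.u23;
     -d.UP1, d.w1, 0, d.z2*d.u11, d.z2*d.u12, d.z2*d.u13;
     0, d.u21, -d.u11, 0, -d.pi3, d.pi2;
     0, d.u22, -d.u12, d.pi3, 0, -d.pi1;
     0, d.u23, -d.u13, -d.pi2, d.pi1, 0]

/-- The third differential of `B` (a `6 × 2` matrix). -/
def b3 : Matrix (Fin 6) (Fin 2) R :=
  !![d.w1, d.z2;
     d.UP1, 0;
     d.UP2, 0;
     d.D1, d.pi1;
     d.D2, d.pi2;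
     d.D3, d.pi3]

end BData

namespace BAcyclicAux

open Matrix

variable {R : Type*} [CommRing R] (d : BData R)


@[simp]
lemma cons_val_five' {α : Type*} {m : ℕ} (x : α) (u : Fin (m+5) → α) :
    Matrix.vecCons x u 5 = Matrix.vecHead (Matrix.vecTail (Matrix.vecTail (Matrix.vecTail (Matrix.vecTail u)))) :=
  rfl

/-- The generating set of the ideal of entries of `b1`. -/
def gset : Set R := {d.UP1, d.UP2, d.z2 * d.D1 - d.w1 * d.pi1,
  d.z2 * d.D2 - d.w1 * d.pi2, d.z2 * d.D3 - d.w1 * d.pi3}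

/-- spot-2 homotopy for generator 1 -/
def S1 : Matrix (Fin 2) (Fin 6) R := !![
  0, 1, 0, 0, 0, 0;
  0, 0, 0, d.u11, d.u12, d.u13]
def T1 : Matrix (Fin 6) (Fin 5) R := !![
  0, -1, 0, 0, 0;
  0, 0, 0, 0, 0;
  0, 0, -d.pi1, -d.pi2, -d.pi3;
  0, 0, 0, d.u13, -d.u12;
  0, 0, -d.u13, 0, d.u11;
  0, 0, d.u12, -d.u11, 0]

/-- spot-2 homotopy for generator 2 -/
def S2 : Matrix (Fin 2) (Fin 6) R := !![
  0, 0, 1, 0, 0, 0;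
  0, 0, 0, d.u21, d.u22, d.u23]
def T2 : Matrix (Fin 6) (Fin 5) R := !![
  1, 0, 0, 0, 0;
  0, 0, d.pi1, d.pi2, d.pi3;
  0, 0, 0, 0, 0;
  0, 0, 0, d.u23, -d.u22;
  0, 0, -d.u23, 0, d.u21;
  0, 0, d.u22, -d.u21, 0]

/-- spot-2 homotopy for generator 3 -/
def S3 : Matrix (Fin 2) (Fin 6) R := !![
  -d.pi1, 0, 0, d.z2, 0, 0;
  -d.u13*d.u22 + d.u12*d.u23, 0, 0, -d.w1, 0, 0]
def T3 : Matrix (Fin 6) (Fin 5) R := !![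
  0, 0, 0, 0, 0;
  0, -d.pi1, 0, -d.u13*d.z2, d.u12*d.z2;
  d.pi1, 0, 0, -d.u23*d.z2, d.u22*d.z2;
  0, 0, 0, 0, 0;
  d.u13, d.u23, 0, 0, -d.w1;
  -d.u12, -d.u22, 0, d.w1, 0]

/-- spot-2 homotopy for generator 4 -/
def S4 : Matrix (Fin 2) (Fin 6) R := !![
  -d.pi2, 0, 0, 0, d.z2, 0;
  d.u13*d.u21 - d.u11*d.u23, 0, 0, 0, -d.w1, 0]
def T4 : Matrix (Fin 6) (Fin 5) R := !![
  0, 0, 0, 0, 0;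
  0, -d.pi2, d.u13*d.z2, 0, -d.u11*d.z2;
  d.pi2, 0, d.u23*d.z2, 0, -d.u21*d.z2;
  -d.u13, -d.u23, 0, 0, d.w1;
  0, 0, 0, 0, 0;
  d.u11, d.u21, -d.w1, 0, 0]

/-- spot-2 homotopy for generator 5 -/
def S5 : Matrix (Fin 2) (Fin 6) R := !![
  -d.pi3, 0, 0, 0, 0, d.z2;
  -d.u12*d.u21 + d.u11*d.u22, 0, 0, 0, 0, -d.w1]
def T5 : Matrix (Fin 6) (Fin 5) R := !![
  0, 0, 0, 0, 0;
  0, -d.pi3, -d.u12*d.z2, d.u11*d.z2, 0;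
  d.pi3, 0, -d.u22*d.z2, d.u21*d.z2, 0;
  d.u12, d.u22, 0, -d.w1, 0;
  -d.u11, -d.u21, d.w1, 0, 0;
  0, 0, 0, 0, 0]



lemma mem_span5 {x : R} (h : x ∈ Ideal.span (gset d)) :
    ∃ c1 c2 c3 c4 c5 : R, x = c1 * d.UP1 + c2 * d.UP2
      + c3 * (d.z2 * d.D1 - d.w1 * d.pi1)
      + c4 * (d.z2 * d.D2 - d.w1 * d.pi2)
      + c5 * (d.z2 * d.D3 - d.w1 * d.pi3) := by
  rw [gset] at h
  obtain ⟨c1, y1, h1, rfl⟩ := Submodule.mem_span_insert.mp h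
  obtain ⟨c2, y2, h2, rfl⟩ := Submodule.mem_span_insert.mp h1
  obtain ⟨c3, y3, h3, rfl⟩ := Submodule.mem_span_insert.mp h2
  obtain ⟨c4, y4, h4, rfl⟩ := Submodule.mem_span_insert.mp h3
  obtain ⟨c5, rfl⟩ := Ideal.mem_span_singleton'.mp h4
  exact ⟨c1, c2, c3, c4, c5, by simp only [smul_eq_mul]; ring⟩

lemma mulVec_mem (J : Ideal R) {m n : ℕ} (M : Matrix (Fin m) (Fin n) R)
    {y : Fin n → R} (hy : ∀ k, y k ∈ J) (i : Fin m) : M.mulVec y i ∈ J := by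
  simp only [Matrix.mulVec, dotProduct]
  exact Ideal.sum_mem _ fun k _ => Ideal.mul_mem_left _ _ (hy k)

/-- Pointwise spot-2 homotopy identities. -/
lemma hom2_1 (v : Fin 6 → R) (i : Fin 6) :
    d.UP1 * v i = d.b3.mulVec ((S1 d).mulVec v) i + (T1 d).mulVec (d.b2.mulVec v) i := by
  fin_cases i <;>
    simp [BData.b1, BData.b2, BData.b3, BData.UP1, BData.UP2, BData.D1, BData.D2, BData.D3,
      S1, T1, Matrix.mulVec, dotProduct, Fin.sum_univ_six, Fin.sum_univ_five, Fin.sum_univ_two, Matrix.vecHead, Matrix.vecTail, Function.comp] <;> ring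

lemma hom2_2 (v : Fin 6 → R) (i : Fin 6) :
    d.UP2 * v i = d.b3.mulVec ((S2 d).mulVec v) i + (T2 d).mulVec (d.b2.mulVec v) i := by
  fin_cases i <;>
    simp [BData.b1, BData.b2, BData.b3, BData.UP1, BData.UP2, BData.D1, BData.D2, BData.D3,
      S2, T2, Matrix.mulVec, dotProduct, Fin.sum_univ_six, Fin.sum_univ_five, Fin.sum_univ_two, Matrix.vecHead, Matrix.vecTail, Function.comp] <;> ring

lemma hom2_3 (v : Fin 6 → R) (i : Fin 6) :
    (d.z2 * d.D1 - d.w1 * d.pi1) * v i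
      = d.b3.mulVec ((S3 d).mulVec v) i + (T3 d).mulVec (d.b2.mulVec v) i := by
  fin_cases i <;>
    simp [BData.b1, BData.b2, BData.b3, BData.UP1, BData.UP2, BData.D1, BData.D2, BData.D3,
      S3, T3, Matrix.mulVec, dotProduct, Fin.sum_univ_six, Fin.sum_univ_five, Fin.sum_univ_two, Matrix.vecHead, Matrix.vecTail, Function.comp] <;> ring

lemma hom2_4 (v : Fin 6 → R) (i : Fin 6) :
    (d.z2 * d.D2 - d.w1 * d.pi2) * v i
      = d.b3.mulVec ((S4 d).mulVec v) i + (T4 d).mulVec (d.b2.mulVec v) i := by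
  fin_cases i <;>
    simp [BData.b1, BData.b2, BData.b3, BData.UP1, BData.UP2, BData.D1, BData.D2, BData.D3,
      S4, T4, Matrix.mulVec, dotProduct, Fin.sum_univ_six, Fin.sum_univ_five, Fin.sum_univ_two, Matrix.vecHead, Matrix.vecTail, Function.comp] <;> ring

lemma hom2_5 (v : Fin 6 → R) (i : Fin 6) :
    (d.z2 * d.D3 - d.w1 * d.pi3) * v i
      = d.b3.mulVec ((S5 d).mulVec v) i + (T5 d).mulVec (d.b2.mulVec v) i := by
  fin_cases i <;>
    simp [BData.b1, BData.b2, BData.b3, BData.UP1, BData.UP2, BData.D1, BData.D2, BData.D3,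
      S5, T5, Matrix.mulVec, dotProduct, Fin.sum_univ_six, Fin.sum_univ_five, Fin.sum_univ_two, Matrix.vecHead, Matrix.vecTail, Function.comp] <;> ring

/-- Pointwise spot-1 homotopy identities. -/
lemma hom1_1 (v : Fin 5 → R) (i : Fin 5) :
    d.UP1 * v i = d.b2.mulVec ((T1 d).mulVec v) i + (![1,0,0,0,0] : Fin 5 → R) i * d.b1.mulVec v 0 := by
  fin_cases i <;>
    simp [BData.b1, BData.b2, BData.b3, BData.UP1, BData.UP2, BData.D1, BData.D2, BData.D3,
      T1, Matrix.mulVec, dotProduct, Fin.sum_univ_six, Fin.sum_univ_five, Fin.sum_univ_two, Matrix.vecHead, Matrix.vecTail, Function.comp] <;> ring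

lemma hom1_2 (v : Fin 5 → R) (i : Fin 5) :
    d.UP2 * v i = d.b2.mulVec ((T2 d).mulVec v) i + (![0,1,0,0,0] : Fin 5 → R) i * d.b1.mulVec v 0 := by
  fin_cases i <;>
    simp [BData.b1, BData.b2, BData.b3, BData.UP1, BData.UP2, BData.D1, BData.D2, BData.D3,
      T2, Matrix.mulVec, dotProduct, Fin.sum_univ_six, Fin.sum_univ_five, Fin.sum_univ_two, Matrix.vecHead, Matrix.vecTail, Function.comp] <;> ring

lemma hom1_3 (v : Fin 5 → R) (i : Fin 5) :
    (d.z2 * d.D1 - d.w1 * d.pi1) * v i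
      = d.b2.mulVec ((T3 d).mulVec v) i + (![0,0,1,0,0] : Fin 5 → R) i * d.b1.mulVec v 0 := by
  fin_cases i <;>
    simp [BData.b1, BData.b2, BData.b3, BData.UP1, BData.UP2, BData.D1, BData.D2, BData.D3,
      T3, Matrix.mulVec, dotProduct, Fin.sum_univ_six, Fin.sum_univ_five, Fin.sum_univ_two, Matrix.vecHead, Matrix.vecTail, Function.comp] <;> ring

lemma hom1_4 (v : Fin 5 → R) (i : Fin 5) :
    (d.z2 * d.D2 - d.w1 * d.pi2) * v i
      = d.b2.mulVec ((T4 d).mulVec v) i + (![0,0,0,1,0] : Fin 5 → R) i * d.b1.mulVec v 0 := by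
  fin_cases i <;>
    simp [BData.b1, BData.b2, BData.b3, BData.UP1, BData.UP2, BData.D1, BData.D2, BData.D3,
      T4, Matrix.mulVec, dotProduct, Fin.sum_univ_six, Fin.sum_univ_five, Fin.sum_univ_two, Matrix.vecHead, Matrix.vecTail, Function.comp] <;> ring

lemma hom1_5 (v : Fin 5 → R) (i : Fin 5) :
    (d.z2 * d.D3 - d.w1 * d.pi3) * v i
      = d.b2.mulVec ((T5 d).mulVec v) i + (![0,0,0,0,1] : Fin 5 → R) i * d.b1.mulVec v 0 := by
  fin_cases i <;>
    simp [BData.b1, BData.b2, BData.b3, BData.UP1, BData.UP2, BData.D1, BData.D2, BData.D3,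
      T5, Matrix.mulVec, dotProduct, Fin.sum_univ_six, Fin.sum_univ_five, Fin.sum_univ_two, Matrix.vecHead, Matrix.vecTail, Function.comp] <;> ring

lemma b2_mulVec_b3 (u : Fin 2 → R) : d.b2.mulVec (d.b3.mulVec u) = 0 := by
  funext i
  fin_cases i <;>
    simp [BData.b2, BData.b3, BData.UP1, BData.UP2, BData.D1, BData.D2, BData.D3,
      Matrix.mulVec, dotProduct, Fin.sum_univ_six, Fin.sum_univ_five, Fin.sum_univ_two, Matrix.vecHead, Matrix.vecTail, Function.comp] <;> ring

lemma b1_mulVec_b2 (u : Fin 6 → R) : d.b1.mulVec (d.b2.mulVec u) = 0 := by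
  funext i
  fin_cases i <;>
    simp [BData.b1, BData.b2, BData.UP1, BData.UP2, BData.D1, BData.D2, BData.D3,
      Matrix.mulVec, dotProduct, Fin.sum_univ_six, Fin.sum_univ_five, Fin.sum_univ_two, Matrix.vecHead, Matrix.vecTail, Function.comp] <;> ring

/-- Combined spot-2 homotopy: for `x` in the ideal, `x•v` is a `b3`-image modulo any
ideal containing the components of `b2.mulVec v`. -/
lemma homA {x : R} (hx : x ∈ Ideal.span (gset d)) (v : Fin 6 → R) :
    ∃ s : Fin 2 → R, ∀ (J : Ideal R), (∀ k, d.b2.mulVec v k ∈ J) →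
      ∀ i, x * v i - d.b3.mulVec s i ∈ J := by
  obtain ⟨c1, c2, c3, c4, c5, hxe⟩ := mem_span5 d hx
  refine ⟨c1 • (S1 d).mulVec v + c2 • (S2 d).mulVec v + c3 • (S3 d).mulVec v
    + c4 • (S4 d).mulVec v + c5 • (S5 d).mulVec v, fun J hJ i => ?_⟩
  have key : x * v i - d.b3.mulVec (c1 • (S1 d).mulVec v + c2 • (S2 d).mulVec v
      + c3 • (S3 d).mulVec v + c4 • (S4 d).mulVec v + c5 • (S5 d).mulVec v) i
      = c1 * (T1 d).mulVec (d.b2.mulVec v) i + c2 * (T2 d).mulVec (d.b2.mulVec v) i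
      + c3 * (T3 d).mulVec (d.b2.mulVec v) i + c4 * (T4 d).mulVec (d.b2.mulVec v) i
      + c5 * (T5 d).mulVec (d.b2.mulVec v) i := by
    simp only [Matrix.mulVec_add, Matrix.mulVec_smul, Pi.add_apply, Pi.smul_apply,
      smul_eq_mul, hxe]
    linear_combination c1 * hom2_1 d v i + c2 * hom2_2 d v i + c3 * hom2_3 d v i
      + c4 * hom2_4 d v i + c5 * hom2_5 d v i
  rw [key]
  have h := fun (M : Matrix (Fin 6) (Fin 5) R) (c : R) =>
    Ideal.mul_mem_left J c (mulVec_mem J M hJ i)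
  exact J.add_mem (J.add_mem (J.add_mem (J.add_mem (h _ c1) (h _ c2)) (h _ c3)) (h _ c4)) (h _ c5)

/-- Combined spot-1 homotopy: if `b1.mulVec v = 0` and `x` is in the ideal then
`x • v` is a `b2`-image. -/
lemma homB {x : R} (hx : x ∈ Ideal.span (gset d)) (v : Fin 5 → R)
    (hv : d.b1.mulVec v = 0) :
    ∃ s : Fin 6 → R, ∀ i, x * v i = d.b2.mulVec s i := by
  obtain ⟨c1, c2, c3, c4, c5, hxe⟩ := mem_span5 d hx
  refine ⟨c1 • (T1 d).mulVec v + c2 • (T2 d).mulVec v + c3 • (T3 d).mulVec v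
    + c4 • (T4 d).mulVec v + c5 • (T5 d).mulVec v, fun i => ?_⟩
  have hv0 : d.b1.mulVec v 0 = 0 := by rw [hv]; rfl
  simp only [Matrix.mulVec_add, Matrix.mulVec_smul, Pi.add_apply, Pi.smul_apply,
    smul_eq_mul, hxe]
  linear_combination c1 * hom1_1 d v i + c2 * hom1_2 d v i + c3 * hom1_3 d v i
    + c4 * hom1_4 d v i + c5 * hom1_5 d v i
    + ((![1,0,0,0,0] : Fin 5 → R) i * c1 + (![0,1,0,0,0] : Fin 5 → R) i * c2
      + (![0,0,1,0,0] : Fin 5 → R) i * c3 + (![0,0,0,1,0] : Fin 5 → R) i * c4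
      + (![0,0,0,0,1] : Fin 5 → R) i * c5) * hv0

/-- Grade-one vanishing of the top homology, relative to an ideal `J`. -/
lemma lemZ (J : Ideal R) {x : R} (hx : x ∈ Ideal.span (gset d))
    (hreg : ∀ r, x * r ∈ J → r ∈ J) (w : Fin 2 → R)
    (hw : ∀ i, d.b3.mulVec w i ∈ J) : ∀ i, w i ∈ J := by
  have hcomp : ∀ i, d.b3.mulVec w i =
      ![d.w1 * w 0 + d.z2 * w 1, d.UP1 * w 0, d.UP2 * w 0,
        d.D1 * w 0 + d.pi1 * w 1, d.D2 * w 0 + d.pi2 * w 1, d.D3 * w 0 + d.pi3 * w 1] i := by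
    intro i
    fin_cases i <;>
      simp [BData.b3, Matrix.mulVec, dotProduct, Fin.sum_univ_six, Fin.sum_univ_five, Fin.sum_univ_two, Matrix.vecHead, Matrix.vecTail, Function.comp] <;> ring
  have h0 : d.w1 * w 0 + d.z2 * w 1 ∈ J := by have := hw 0; rw [hcomp 0] at this; simpa using this
  have h1 : d.UP1 * w 0 ∈ J := by have := hw 1; rw [hcomp 1] at this; simpa using this
  have h2 : d.UP2 * w 0 ∈ J := by have := hw 2; rw [hcomp 2] at this; simpa using this
  have h3 : d.D1 * w 0 + d.pi1 * w 1 ∈ J := by have := hw 3; rw [hcomp 3] at this; simpa using this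
  have h4 : d.D2 * w 0 + d.pi2 * w 1 ∈ J := by have := hw 4; rw [hcomp 4] at this; simpa using this
  have h5 : d.D3 * w 0 + d.pi3 * w 1 ∈ J := by have := hw 5; rw [hcomp 5] at this; simpa using this
  have hg3a : (d.z2 * d.D1 - d.w1 * d.pi1) * w 0 ∈ J := by
    have hm := J.sub_mem (J.mul_mem_left d.z2 h3) (J.mul_mem_left d.pi1 h0)
    have : d.z2 * (d.D1 * w 0 + d.pi1 * w 1) - d.pi1 * (d.w1 * w 0 + d.z2 * w 1)
        = (d.z2 * d.D1 - d.w1 * d.pi1) * w 0 := by ring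
    rwa [this] at hm
  have hg4a : (d.z2 * d.D2 - d.w1 * d.pi2) * w 0 ∈ J := by
    have hm := J.sub_mem (J.mul_mem_left d.z2 h4) (J.mul_mem_left d.pi2 h0)
    have : d.z2 * (d.D2 * w 0 + d.pi2 * w 1) - d.pi2 * (d.w1 * w 0 + d.z2 * w 1)
        = (d.z2 * d.D2 - d.w1 * d.pi2) * w 0 := by ring
    rwa [this] at hm
  have hg5a : (d.z2 * d.D3 - d.w1 * d.pi3) * w 0 ∈ J := by
    have hm := J.sub_mem (J.mul_mem_left d.z2 h5) (J.mul_mem_left d.pi3 h0)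
    have : d.z2 * (d.D3 * w 0 + d.pi3 * w 1) - d.pi3 * (d.w1 * w 0 + d.z2 * w 1)
        = (d.z2 * d.D3 - d.w1 * d.pi3) * w 0 := by ring
    rwa [this] at hm
  obtain ⟨c1, c2, c3, c4, c5, hxe⟩ := mem_span5 d hx
  have ha : w 0 ∈ J := by
    apply hreg
    have : x * w 0 = c1 * (d.UP1 * w 0) + c2 * (d.UP2 * w 0)
        + c3 * ((d.z2 * d.D1 - d.w1 * d.pi1) * w 0)
        + c4 * ((d.z2 * d.D2 - d.w1 * d.pi2) * w 0)
        + c5 * ((d.z2 * d.D3 - d.w1 * d.pi3) * w 0) := by rw [hxe]; ring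
    rw [this]
    exact J.add_mem (J.add_mem (J.add_mem (J.add_mem (J.mul_mem_left _ h1)
      (J.mul_mem_left _ h2)) (J.mul_mem_left _ hg3a)) (J.mul_mem_left _ hg4a))
      (J.mul_mem_left _ hg5a)
  have hp1 : d.pi1 * w 1 ∈ J := by
    have hm := J.sub_mem h3 (J.mul_mem_left d.D1 ha)
    simpa using hm
  have hp2 : d.pi2 * w 1 ∈ J := by
    have hm := J.sub_mem h4 (J.mul_mem_left d.D2 ha)
    simpa using hm
  have hp3 : d.pi3 * w 1 ∈ J := by
    have hm := J.sub_mem h5 (J.mul_mem_left d.D3 ha)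
    simpa using hm
  have hz : d.z2 * w 1 ∈ J := by
    have hm := J.sub_mem h0 (J.mul_mem_left d.w1 ha)
    simpa using hm
  have hup1b : d.UP1 * w 1 ∈ J := by
    have : d.UP1 * w 1 = d.u11 * (d.pi1 * w 1) + d.u12 * (d.pi2 * w 1)
        + d.u13 * (d.pi3 * w 1) := by rw [BData.UP1]; ring
    rw [this]
    exact J.add_mem (J.add_mem (J.mul_mem_left _ hp1) (J.mul_mem_left _ hp2))
      (J.mul_mem_left _ hp3)
  have hup2b : d.UP2 * w 1 ∈ J := by
    have : d.UP2 * w 1 = d.u21 * (d.pi1 * w 1) + d.u22 * (d.pi2 * w 1)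
        + d.u23 * (d.pi3 * w 1) := by rw [BData.UP2]; ring
    rw [this]
    exact J.add_mem (J.add_mem (J.mul_mem_left _ hp1) (J.mul_mem_left _ hp2))
      (J.mul_mem_left _ hp3)
  have hg3b : (d.z2 * d.D1 - d.w1 * d.pi1) * w 1 ∈ J := by
    have hm := J.sub_mem (J.mul_mem_left d.D1 hz) (J.mul_mem_left d.w1 hp1)
    have : d.D1 * (d.z2 * w 1) - d.w1 * (d.pi1 * w 1)
        = (d.z2 * d.D1 - d.w1 * d.pi1) * w 1 := by ring
    rwa [this] at hm
  have hg4b : (d.z2 * d.D2 - d.w1 * d.pi2) * w 1 ∈ J := by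
    have hm := J.sub_mem (J.mul_mem_left d.D2 hz) (J.mul_mem_left d.w1 hp2)
    have : d.D2 * (d.z2 * w 1) - d.w1 * (d.pi2 * w 1)
        = (d.z2 * d.D2 - d.w1 * d.pi2) * w 1 := by ring
    rwa [this] at hm
  have hg5b : (d.z2 * d.D3 - d.w1 * d.pi3) * w 1 ∈ J := by
    have hm := J.sub_mem (J.mul_mem_left d.D3 hz) (J.mul_mem_left d.w1 hp3)
    have : d.D3 * (d.z2 * w 1) - d.w1 * (d.pi3 * w 1)
        = (d.z2 * d.D3 - d.w1 * d.pi3) * w 1 := by ring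
    rwa [this] at hm
  have hb : w 1 ∈ J := by
    apply hreg
    have : x * w 1 = c1 * (d.UP1 * w 1) + c2 * (d.UP2 * w 1)
        + c3 * ((d.z2 * d.D1 - d.w1 * d.pi1) * w 1)
        + c4 * ((d.z2 * d.D2 - d.w1 * d.pi2) * w 1)
        + c5 * ((d.z2 * d.D3 - d.w1 * d.pi3) * w 1) := by rw [hxe]; ring
    rw [this]
    exact J.add_mem (J.add_mem (J.add_mem (J.add_mem (J.mul_mem_left _ hup1b)
      (J.mul_mem_left _ hup2b)) (J.mul_mem_left _ hg3b)) (J.mul_mem_left _ hg4b))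
      (J.mul_mem_left _ hg5b)
  intro i
  fin_cases i
  · exact ha
  · exact hb

/-- Vanishing of the middle homology, relative to an ideal `J`. -/
lemma lemY (J : Ideal R) {x x' : R} (hx : x ∈ Ideal.span (gset d))
    (hx' : x' ∈ Ideal.span (gset d))
    (hreg : ∀ r, x * r ∈ J → r ∈ J)
    (hreg' : ∀ r, x' * r ∈ J ⊔ Ideal.span {x} → r ∈ J ⊔ Ideal.span {x})
    (v : Fin 6 → R) (hv : ∀ i, d.b2.mulVec v i ∈ J) :
    ∃ u : Fin 2 → R, ∀ i, v i - d.b3.mulVec u i ∈ J := by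
  obtain ⟨s, hs⟩ := homA d hx v
  have hsJ := hs J hv
  have hsup : ∀ i, d.b3.mulVec s i ∈ J ⊔ Ideal.span {x} := by
    intro i
    have : d.b3.mulVec s i = -(x * v i - d.b3.mulVec s i) + x * v i := by ring
    rw [this]
    exact Submodule.add_mem _ (Submodule.mem_sup_left (J.neg_mem (hsJ i)))
      (Submodule.mem_sup_right (Ideal.mem_span_singleton.mpr ⟨v i, rfl⟩))
  have hws := lemZ d (J ⊔ Ideal.span {x}) hx' hreg' s hsup
  obtain ⟨y0, hy0, z0, hz0, hsum0⟩ := Submodule.mem_sup.mp (hws 0)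
  obtain ⟨y1, hy1, z1, hz1, hsum1⟩ := Submodule.mem_sup.mp (hws 1)
  obtain ⟨r0, hr0⟩ := Ideal.mem_span_singleton.mp hz0
  obtain ⟨r1, hr1⟩ := Ideal.mem_span_singleton.mp hz1
  refine ⟨![r0, r1], fun i => ?_⟩
  apply hreg
  have hse : s = ![y0, y1] + x • ![r0, r1] := by
    funext k
    fin_cases k
    · show s 0 = y0 + x * r0
      rw [← hsum0, hr0]
    · show s 1 = y1 + x * r1
      rw [← hsum1, hr1]
  have hsplit : d.b3.mulVec s = d.b3.mulVec ![y0, y1] + x • d.b3.mulVec ![r0, r1] := by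
    rw [hse, Matrix.mulVec_add, Matrix.mulVec_smul]
  have heq : x * (v i - d.b3.mulVec ![r0, r1] i)
      = (x * v i - d.b3.mulVec s i) + d.b3.mulVec ![y0, y1] i := by
    rw [hsplit]
    simp only [Pi.add_apply, Pi.smul_apply, smul_eq_mul]
    ring
  rw [heq]
  have hy : ∀ k, (![y0, y1] : Fin 2 → R) k ∈ J := by
    intro k; fin_cases k
    · simpa using hy0
    · simpa using hy1
  exact J.add_mem (hsJ i) (mulVec_mem J d.b3 hy i)

lemma quot_reg {J : Ideal R} {x : R}
    (h : IsSMulRegular (R ⧸ (J • ⊤ : Submodule R R)) x) (r : R) (hr : x * r ∈ J) :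
    r ∈ J := by
  have hJ : (J • ⊤ : Submodule R R) = J := by
    rw [smul_eq_mul, Ideal.mul_top]
  have h0 : x • (Submodule.Quotient.mk r : R ⧸ (J • ⊤ : Submodule R R))
      = x • (0 : R ⧸ (J • ⊤ : Submodule R R)) := by
    rw [smul_zero, ← Submodule.Quotient.mk_smul, Submodule.Quotient.mk_eq_zero, hJ]
    simpa [smul_eq_mul] using hr
  have := h h0
  rwa [Submodule.Quotient.mk_eq_zero, hJ] at this

end BAcyclicAux

/-- Theorem: if the ideal generated by the five entries of `b1` contains a regular
sequence of length three, then Brown's complex `B` is acyclic. -/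
theorem B_acyclic {R : Type*} [CommRing R] [IsNoetherianRing R] (d : BData R)
    (hgrade : ∃ rs : List R, rs.length = 3 ∧
      (∀ x ∈ rs, x ∈ Ideal.span {d.UP1, d.UP2, d.z2 * d.D1 - d.w1 * d.pi1,
        d.z2 * d.D2 - d.w1 * d.pi2, d.z2 * d.D3 - d.w1 * d.pi3}) ∧
      RingTheory.Sequence.IsRegular R rs) :
    Function.Injective d.b3.mulVecLin ∧
    LinearMap.ker d.b2.mulVecLin = LinearMap.range d.b3.mulVecLin ∧
    LinearMap.ker d.b1.mulVecLin = LinearMap.range d.b2.mulVecLin := by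
  classical
  obtain ⟨rs, hlen, hmem, hregseq⟩ := hgrade
  match rs, hlen with
  | [x1, x2, x3], _ =>
  have hgs : ({d.UP1, d.UP2, d.z2 * d.D1 - d.w1 * d.pi1,
      d.z2 * d.D2 - d.w1 * d.pi2, d.z2 * d.D3 - d.w1 * d.pi3} : Set R)
      = BAcyclicAux.gset d := rfl
  have hx1 : x1 ∈ Ideal.span (BAcyclicAux.gset d) := by
    rw [← hgs]; exact hmem x1 (by simp)
  have hx2 : x2 ∈ Ideal.span (BAcyclicAux.gset d) := by
    rw [← hgs]; exact hmem x2 (by simp)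
  have hx3 : x3 ∈ Ideal.span (BAcyclicAux.gset d) := by
    rw [← hgs]; exact hmem x3 (by simp)
  have hw := hregseq.toIsWeaklyRegular.regular_mod_prev
  -- regularity of x1 on R
  have r1 := hw 0 (by norm_num)
  have r2 := hw 1 (by norm_num)
  have r3 := hw 2 (by norm_num)
  simp only [List.take, Ideal.ofList_nil, Ideal.ofList_cons, Ideal.ofList_singleton,
    List.getElem_cons_zero, List.getElem_cons_succ] at r1 r2 r3
  have hreg1 : ∀ r : R, x1 * r ∈ (⊥ : Ideal R) → r ∈ (⊥ : Ideal R) := by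
    intro r hr
    have r1' : IsSMulRegular (R ⧸ ((⊥ : Ideal R) • ⊤ : Submodule R R)) x1 := by
      have e : Ideal.ofList (List.take 0 [x1, x2, x3]) = ⊥ := by simp
      have := hw 0 (by norm_num)
      rw [e] at this
      exact this
    exact BAcyclicAux.quot_reg r1' r hr
  have hreg2 : ∀ r : R, x2 * r ∈ Ideal.span {x1} → r ∈ Ideal.span {x1} := by
    intro r hr
    have r2' : IsSMulRegular (R ⧸ ((Ideal.span {x1} : Ideal R) • ⊤ : Submodule R R)) x2 := by
      have e : Ideal.ofList (List.take 1 [x1, x2, x3]) = Ideal.span {x1} := by simp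
      have := hw 1 (by norm_num)
      rw [e] at this
      exact this
    exact BAcyclicAux.quot_reg r2' r hr
  have hreg3 : ∀ r : R, x3 * r ∈ Ideal.span {x1} ⊔ Ideal.span {x2}
      → r ∈ Ideal.span {x1} ⊔ Ideal.span {x2} := by
    intro r hr
    have r3' : IsSMulRegular
        (R ⧸ ((Ideal.span {x1} ⊔ Ideal.span {x2} : Ideal R) • ⊤ : Submodule R R)) x3 := by
      have e : Ideal.ofList (List.take 2 [x1, x2, x3]) = Ideal.span {x1} ⊔ Ideal.span {x2} := by
        simp [Ideal.ofList_cons, Ideal.ofList_singleton]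
      have := hw 2 (by norm_num)
      rw [e] at this
      exact this
    exact BAcyclicAux.quot_reg r3' r hr
  -- Part 1: injectivity of b3
  have hinj : Function.Injective d.b3.mulVecLin := by
    intro a b hab
    have hz : d.b3.mulVec (a - b) = 0 := by
      have : d.b3.mulVecLin (a - b) = 0 := by rw [map_sub, hab, sub_self]
      simpa [Matrix.mulVecLin_apply] using this
    have := BAcyclicAux.lemZ d ⊥ hx1 hreg1 (a - b) (fun i => by simp [hz])
    funext i
    have hi := this i
    simp only [Ideal.mem_bot, Pi.sub_apply] at hi
    exact sub_eq_zero.mp hi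
  refine ⟨hinj, ?_, ?_⟩
  -- Part 2: ker b2 = range b3
  · ext v
    constructor
    · intro hv
      have hv' : d.b2.mulVec v = 0 := by
        simpa [Matrix.mulVecLin_apply] using hv
      have hreg2' : ∀ r : R, x2 * r ∈ (⊥ : Ideal R) ⊔ Ideal.span {x1}
          → r ∈ (⊥ : Ideal R) ⊔ Ideal.span {x1} := by
        simpa [bot_sup_eq] using hreg2
      obtain ⟨u, hu⟩ := BAcyclicAux.lemY d ⊥ hx1 hx2 hreg1 hreg2' v
        (fun i => by simp [hv'])
      refine ⟨u, ?_⟩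
      funext i
      have hi := hu i
      simp only [Ideal.mem_bot, Pi.sub_apply] at hi
      rw [Matrix.mulVecLin_apply]
      exact (sub_eq_zero.mp hi).symm
    · rintro ⟨u, rfl⟩
      simp only [LinearMap.mem_ker, Matrix.mulVecLin_apply]
      exact BAcyclicAux.b2_mulVec_b3 d u
  -- Part 3: ker b1 = range b2
  · ext v
    constructor
    · intro hv
      have hv' : d.b1.mulVec v = 0 := by
        simpa [Matrix.mulVecLin_apply] using hv
      obtain ⟨s, hs⟩ := BAcyclicAux.homB d hx1 v hv'
      have hsJ : ∀ i, d.b2.mulVec s i ∈ Ideal.span {x1} := by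
        intro i
        rw [← hs i]
        exact Ideal.mem_span_singleton.mpr ⟨v i, rfl⟩
      have hreg3' : ∀ r : R, x3 * r ∈ Ideal.span {x1} ⊔ Ideal.span {x2}
          → r ∈ Ideal.span {x1} ⊔ Ideal.span {x2} := hreg3
      obtain ⟨u, hu⟩ := BAcyclicAux.lemY d (Ideal.span {x1}) hx2 hx3 hreg2 hreg3' s hsJ
      choose w' hw' using fun i => Ideal.mem_span_singleton.mp (hu i)
      have hsplit : d.b2.mulVec s = x1 • d.b2.mulVec w' := by
        have hse : s = d.b3.mulVec u + x1 • w' := by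
          funext k
          have := hw' k
          simp only [Pi.add_apply, Pi.smul_apply, smul_eq_mul]
          linear_combination this
        rw [hse, Matrix.mulVec_add, Matrix.mulVec_smul,
          BAcyclicAux.b2_mulVec_b3 d u, zero_add]
      refine ⟨w', ?_⟩
      funext i
      rw [Matrix.mulVecLin_apply]
      have h0 : x1 * (v i - d.b2.mulVec w' i) = 0 := by
        have h1 := hs i
        rw [hsplit] at h1
        simp only [Pi.smul_apply, smul_eq_mul] at h1
        linear_combination h1
      have := hreg1 _ (by simpa using h0)
      simp only [Ideal.mem_bot] at this
      exact (sub_eq_zero.mp this).symm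
    · rintro ⟨u, rfl⟩
      simp only [LinearMap.mem_ker, Matrix.mulVecLin_apply]
      exact BAcyclicAux.b1_mulVec_b2 d u
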